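/- Let R be a commutative ring isomorphic to a finite direct product of fields. Then for any a, b ∈ R[x], a greatest common divisor of a and b exists, i.e., there is g ∈ R[x] with g | a, g | b, and every common divisor of a and b divides g. -/

import Mathlib

open Polynomial

section Aux

variable {R : Type} [CommRing R] {r : ℕ} {F : Fin r → Type}
  [∀ i, Field (F i)] (e : R ≃+* ∀ i, F i)

/-- The component ring homs `R[x] → (F i)[x]`. -/
noncomputable def auxPhi (i : Fin r) : Polynomial R →+* Polynomial (F i) :=
  (mapRingHom (Pi.evalRingHom F i)).comp (mapRingHom (e : R →+* ∀ i, F i))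

lemma auxPhi_coeff (i : Fin r) (p : Polynomial R) (n : ℕ) :
    (auxPhi e i p).coeff n = e (p.coeff n) i := by
  simp [auxPhi, coeff_map]

lemma auxPhi_inj {p q : Polynomial R} (h : ∀ i, auxPhi e i p = auxPhi e i q) : p = q := by
  ext n
  have h2 : ∀ i, e (p.coeff n) i = e (q.coeff n) i := fun i => by
    rw [← auxPhi_coeff, ← auxPhi_coeff, h i]
  exact e.injective (funext h2)

/-- Lift a family of polynomials to a polynomial over `R`. -/
noncomputable def auxLift (h : ∀ i, Polynomial (F i)) : Polynomial R :=
  ∑ n ∈ Finset.range (Finset.univ.sup (fun i => (h i).natDegree) + 1),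
    Polynomial.monomial n (e.symm (fun i => (h i).coeff n))

lemma auxPhi_auxLift (h : ∀ i, Polynomial (F i)) (i : Fin r) :
    auxPhi e i (auxLift e h) = h i := by
  ext n
  rw [auxPhi_coeff]
  rw [auxLift]
  rw [Polynomial.finset_sum_coeff]
  simp only [Polynomial.coeff_monomial]
  by_cases hn : n < Finset.univ.sup (fun i => (h i).natDegree) + 1
  · rw [Finset.sum_eq_single n]
    · simp
    · intro m _ hm; simp [hm]
    · intro hmem; exact absurd (Finset.mem_range.mpr hn) hmem
  · rw [Finset.sum_eq_zero]
    · have : (h i).natDegree < n := by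
        have h3 := Finset.le_sup (f := fun i => (h i).natDegree) (Finset.mem_univ i)
        omega
      rw [Polynomial.coeff_eq_zero_of_natDegree_lt this]
      simp
    · intro m hm
      have : m ≠ n := by
        have := Finset.mem_range.mp hm; omega
      simp [this]

lemma auxDvd {p q : Polynomial R} (h : ∀ i, auxPhi e i p ∣ auxPhi e i q) : p ∣ q := by
  choose c hc using h
  refine ⟨auxLift e c, auxPhi_inj e fun i => ?_⟩
  rw [map_mul, auxPhi_auxLift, hc]

end Aux

/-- If `R` is a commutative ring isomorphic to a finite direct product of fields, then any two
polynomials `a, b ∈ R[x]` have a greatest common divisor. -/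
theorem gcd_exists_of_prod_fields {R : Type} [CommRing R] {r : ℕ} (F : Fin r → Type)
    [∀ i, Field (F i)] (e : R ≃+* ∀ i, F i) (a b : Polynomial R) :
    ∃ g : Polynomial R, g ∣ a ∧ g ∣ b ∧ ∀ d : Polynomial R, d ∣ a → d ∣ b → d ∣ g := by
  classical
  refine ⟨auxLift e (fun i => EuclideanDomain.gcd (auxPhi e i a) (auxPhi e i b)), ?_, ?_, ?_⟩
  · exact auxDvd e fun i => by
      rw [auxPhi_auxLift]; exact EuclideanDomain.gcd_dvd_left _ _
  · exact auxDvd e fun i => by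
      rw [auxPhi_auxLift]; exact EuclideanDomain.gcd_dvd_right _ _
  · intro d hda hdb
    exact auxDvd e fun i => by
      rw [auxPhi_auxLift]
      exact EuclideanDomain.dvd_gcd (map_dvd _ hda) (map_dvd _ hdb)
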